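/- arXiv:1807.02579 — 4 statements merged into one kernel-verified Lean document; each statement's English description precedes it below -/
import Mathlib

section
/- Let L/K be fields of characteristic zero with intermediate fields E, F such that K is algebraically closed in E and E, F are algebraically disjoint over K. Then E ∩ F = K. -/
/-- Two intermediate fields `E`, `F` of `L/K` are algebraically disjoint over `K` if every
finite family of elements of `E` that is algebraically independent over `K` remains
algebraically independent over `F`. -/
def AlgebraicallyDisjoint {K L : Type*} [Field K] [Field L] [Algebra K L]
    (E F : IntermediateField K L) : Prop :=
  ∀ (n : ℕ) (x : Fin n → L), (∀ i, x i ∈ E) → AlgebraicIndependent K x →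
    AlgebraicIndependent F x

/-- `K` is algebraically closed in `E` if every element of `E` algebraic over `K` lies
in (the image of) `K`. -/
def AlgebraicallyClosedIn {K L : Type*} [Field K] [Field L] [Algebra K L]
    (E : IntermediateField K L) : Prop :=
  ∀ x ∈ E, IsAlgebraic K x → ∃ y : K, algebraMap K L y = x


/-- let `L/K` be fields of characteristic zero with intermediate fields
`E`, `F` such that `K` is algebraically closed in `E` and `E`, `F` are algebraically
disjoint over `K`.  Then `E ∩ F = K`. -/
theorem inf_eq_bot_of_algebraically_disjoint {K L : Type*} [Field K] [Field L]
    [Algebra K L] [CharZero K] (E F : IntermediateField K L)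
    (hclosed : AlgebraicallyClosedIn E)
    (hdisj : AlgebraicallyDisjoint E F) :
    E ⊓ F = ⊥ := by
  refine le_antisymm (fun α hα => ?_) bot_le
  obtain ⟨hE, hF⟩ := hα
  have halg : IsAlgebraic K α := by
    by_contra htr
    have hK : AlgebraicIndependent K ![α] :=
      algebraicIndependent_iff_transcendental.mpr htr
    have hF' : AlgebraicIndependent (↥F) ![α] :=
      hdisj 1 ![α] (fun i => by fin_cases i <;> simpa) hK
    have : Transcendental (↥F) α := algebraicIndependent_iff_transcendental.mp hF'
    exact this (isAlgebraic_algebraMap (⟨α, hF⟩ : F))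
  obtain ⟨y, hy⟩ := hclosed α hE halg
  exact hy ▸ IntermediateField.algebraMap_mem ⊥ y
end

section
/- Let E/E₀ be a finite field extension in characteristic zero and α ∈ E. If Tr_{E/E₀}(α^n) lies in a subfield K ⊂ E₀ for all n = 0, 1, ..., [E:E₀], then the minimal polynomial of α over E₀ has coefficients in K; in particular α is algebraic over K. -/
open Polynomial Finset

/-- let `E/E₀` be a finite field extension in characteristic zero,
`α ∈ E`, and `K ⊆ E₀` a subfield.  If `Tr_{E/E₀}(αⁿ)` lies in `K` for all
`n = 0, 1, …, [E:E₀]`, then the minimal polynomial of `α` over `E₀` has coefficients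
in `K`; in particular `α` is algebraic over `K`. -/
theorem minpoly_coeff_mem_of_trace_pow_mem {K E₀ E : Type*}
    [Field K] [Field E₀] [Field E] [CharZero K]
    [Algebra K E₀] [Algebra E₀ E] [Algebra K E] [IsScalarTower K E₀ E]
    [FiniteDimensional E₀ E] (α : E)
    (htr : ∀ n : ℕ, n ≤ Module.finrank E₀ E →
      Algebra.trace E₀ E (α ^ n) ∈ (algebraMap K E₀).range) :
    (∀ i : ℕ, (minpoly E₀ α).coeff i ∈ (algebraMap K E₀).range) ∧ IsAlgebraic K α := by
  classical
  haveI : CharZero E₀ := charZero_of_injective_algebraMap (algebraMap K E₀).injective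
  set A := AlgebraicClosure E₀ with hA
  haveI : CharZero A := charZero_of_injective_algebraMap (algebraMap E₀ A).injective
  set d := Module.finrank E₀ E with hd
  have hd0 : d ≠ 0 := Module.finrank_pos.ne'
  let f : (E →ₐ[E₀] A) → A := fun σ => σ α
  have hcard : Fintype.card (E →ₐ[E₀] A) = d := AlgHom.card E₀ E A
  -- power sums of the conjugates lie in the image of `K`
  have hpsum : ∀ n : ℕ, n ≤ d →
      (∑ σ : E →ₐ[E₀] A, f σ ^ n) ∈ (algebraMap K A).range := by
    intro n hn
    obtain ⟨c, hc⟩ := htr n hn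
    refine ⟨c, ?_⟩
    have h1 : algebraMap E₀ A (Algebra.trace E₀ E (α ^ n)) = ∑ σ : E →ₐ[E₀] A, σ (α ^ n) :=
      trace_eq_sum_embeddings A
    rw [IsScalarTower.algebraMap_apply K E₀ A, hc, h1]
    simp [f]
  let M : Multiset A := Finset.univ.val.map f
  have hMcard : Multiset.card M = d := by
    simpa [M] using hcard
  -- elementary symmetric functions of the conjugates lie in the image of `K`
  have hesymm : ∀ k : ℕ, k ≤ d → M.esymm k ∈ (algebraMap K A).range := by
    intro k
    induction k using Nat.strong_induction_on with
    | _ k ih =>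
      intro hk
      rcases Nat.eq_zero_or_pos k with rfl | hkpos
      · exact ⟨1, by simp [Multiset.esymm]⟩
      · have key : (k : A) * M.esymm k =
            (-1) ^ (k + 1) * ∑ a ∈ (antidiagonal k).filter (fun a => a.1 < k),
              (-1) ^ a.1 * M.esymm a.1 * (∑ σ : E →ₐ[E₀] A, f σ ^ a.2) := by
          have h := congrArg (MvPolynomial.aeval f)
            (MvPolynomial.mul_esymm_eq_sum (E →ₐ[E₀] A) A k)
          have he : ∀ j, MvPolynomial.eval f (MvPolynomial.esymm (E →ₐ[E₀] A) A j) = M.esymm j :=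
            fun j => MvPolynomial.aeval_esymm_eq_multiset_esymm (E →ₐ[E₀] A) A j f
          simpa [MvPolynomial.aeval_esymm_eq_multiset_esymm, MvPolynomial.psum, M, he] using h

        have hmem : ((-1 : A) ^ (k + 1) * ∑ a ∈ (antidiagonal k).filter (fun a => a.1 < k),
              (-1) ^ a.1 * M.esymm a.1 * (∑ σ : E →ₐ[E₀] A, f σ ^ a.2))
            ∈ (algebraMap K A).range := by
          refine mul_mem (pow_mem (neg_mem (one_mem _)) _) (sum_mem fun a ha => ?_)
          simp only [Finset.mem_filter, Finset.HasAntidiagonal.mem_antidiagonal] at ha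
          refine mul_mem (mul_mem (pow_mem (neg_mem (one_mem _)) _) ?_) ?_
          · exact ih a.1 ha.2 (le_trans (le_of_lt ha.2) hk |>.trans le_rfl)
          · exact hpsum a.2 (by omega)
        obtain ⟨y, hy⟩ := hmem
        refine ⟨(k : K)⁻¹ * y, ?_⟩
        have hk0 : (k : A) ≠ 0 := Nat.cast_ne_zero.2 hkpos.ne'
        apply mul_left_cancel₀ hk0
        rw [key, ← hy, ← map_natCast (algebraMap K A) k, ← map_mul,
          ← mul_assoc, mul_inv_cancel₀ (Nat.cast_ne_zero.2 hkpos.ne' : (k : K) ≠ 0), one_mul]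
  -- the product of `X - conjugate` lifts to `K[X]`
  let P : A[X] := (M.map fun t => X - C t).prod
  have hPmonic : P.Monic :=
    monic_multiset_prod_of_monic _ _ fun t _ => monic_X_sub_C t
  have hPdeg : P.natDegree = d := by
    rw [natDegree_multiset_prod_of_monic _ (by
      intro g hg
      obtain ⟨t, _, rfl⟩ := Multiset.mem_map.1 hg
      exact monic_X_sub_C t)]
    simp [hMcard, Multiset.map_map, Function.comp_def]
  have hPlift : P ∈ lifts (algebraMap K A) := by
    rw [lifts_iff_coeff_lifts]
    intro n
    by_cases hn : n ≤ Multiset.card M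
    · rw [Multiset.prod_X_sub_C_coeff M hn]
      obtain ⟨y, hy⟩ := hesymm (Multiset.card M - n) (by omega)
      exact ⟨(-1) ^ (Multiset.card M - n) * y, by rw [map_mul, hy]; simp⟩
    · refine ⟨0, ?_⟩
      rw [map_zero]
      exact (coeff_eq_zero_of_natDegree_lt (by omega : P.natDegree < n)).symm
  obtain ⟨P₀, hP₀map, hP₀deg, hP₀monic⟩ :=
    lifts_and_degree_eq_and_monic hPlift hPmonic
  -- an embedding of `E` into `A`
  haveI : Algebra.IsAlgebraic E₀ E := Algebra.IsAlgebraic.of_finite E₀ E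
  let ι : E →ₐ[E₀] A := IsAlgClosed.lift
  have hPeval : P.eval (ι α) = 0 := by
    rw [show P = (M.map fun t => X - C t).prod from rfl, eval_multiset_prod]
    apply Multiset.prod_eq_zero
    rw [Multiset.map_map]
    refine Multiset.mem_map.2 ⟨ι α, ?_, by simp⟩
    exact Multiset.mem_map.2 ⟨ι, Finset.mem_univ ι, rfl⟩
  have hια : Polynomial.aeval (ι α) P₀ = 0 := by
    rw [Polynomial.aeval_def, ← Polynomial.eval_map, hP₀map, hPeval]
  have hintι : IsIntegral K (ι α) := ⟨P₀, hP₀monic, hια⟩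
  have hr : minpoly K (ι α) = minpoly K α :=
    minpoly.algHom_eq (ι.restrictScalars K) (ι.restrictScalars K).injective α
  set r := minpoly K α with hrdef
  have hintK : IsIntegral K α :=
    (isIntegral_algHom_iff (ι.restrictScalars K) (ι.restrictScalars K).injective).1
      (show IsIntegral K ((ι.restrictScalars K) α) from hintι)
  have hαr : Polynomial.aeval α r = 0 := minpoly.aeval K α
  have hrdvd : r ∣ P₀ := hr ▸ minpoly.dvd K (ι α) hια
  have hint : IsIntegral E₀ α := IsIntegral.of_finite E₀ α
  -- each conjugate is a root of the minimal polynomial over `E₀`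
  have hfactor : ∀ t ∈ M, (X - C t) ∣ (minpoly E₀ α).map (algebraMap E₀ A) := by
    intro t ht
    obtain ⟨σ, _, rfl⟩ := Multiset.mem_map.1 ht
    rw [dvd_iff_isRoot]
    show eval (σ α) ((minpoly E₀ α).map (algebraMap E₀ A)) = 0
    rw [Polynomial.eval_map, ← Polynomial.aeval_def, Polynomial.aeval_algHom_apply,
      minpoly.aeval, map_zero]
  have hPdvd : P ∣ ((minpoly E₀ α).map (algebraMap E₀ A)) ^ d := by
    have h1 : P ∣ (M.map fun _ => (minpoly E₀ α).map (algebraMap E₀ A)).prod :=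
      Multiset.prod_dvd_prod_of_dvd _ _ (fun t ht => by
        simpa using hfactor t ht)
    rwa [Multiset.map_const', Multiset.prod_replicate, hMcard] at h1
  have hrA : r.map (algebraMap K A) ∣ ((minpoly E₀ α).map (algebraMap E₀ A)) ^ d :=
    (Polynomial.map_dvd (algebraMap K A) hrdvd).trans (hP₀map ▸ hPdvd)
  have hsep : r.Separable := (hr ▸ minpoly.irreducible hintι).separable
  have hsq : Squarefree (r.map (algebraMap K A)) := hsep.map.squarefree
  have h1 : r.map (algebraMap K A) ∣ (minpoly E₀ α).map (algebraMap E₀ A) :=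
    (hsq.dvd_pow_iff_dvd hd0).1 hrA
  have hpdvd : minpoly E₀ α ∣ r.map (algebraMap K E₀) :=
    minpoly.dvd E₀ α (by rw [aeval_map_algebraMap]; exact hαr)
  have h2 : (minpoly E₀ α).map (algebraMap E₀ A) ∣ r.map (algebraMap K A) := by
    have h := Polynomial.map_dvd (algebraMap E₀ A) hpdvd
    rwa [Polynomial.map_map, ← IsScalarTower.algebraMap_eq] at h
  have heq : (minpoly E₀ α).map (algebraMap E₀ A) = r.map (algebraMap K A) :=
    eq_of_monic_of_associated ((minpoly.monic hint).map _) ((minpoly.monic hintK).map _)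
      (associated_of_dvd_dvd h2 h1)
  have hpr : minpoly E₀ α = r.map (algebraMap K E₀) := by
    apply Polynomial.map_injective (algebraMap E₀ A) (algebraMap E₀ A).injective
    rw [Polynomial.map_map, ← IsScalarTower.algebraMap_eq]
    exact heq
  refine ⟨fun i => ?_, ⟨r, minpoly.ne_zero hintK, hαr⟩⟩
  rw [hpr, coeff_map]
  exact ⟨r.coeff i, rfl⟩
end

section
/- Let q be a nondegenerate quadratic form over ℚ of rank 1, determined by α ∈ ℚ^×/(ℚ^×)². If for almost all primes ℓ the image of α in ℚ_ℓ^×/(ℚ_ℓ^×)² equals the class of a fixed nonzero rational number c, then α = c in ℚ^×/(ℚ^×)². -/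
open scoped NumberTheorySymbols in
/-- If `b₀ % 8 = 1` and `b₀ ≡ 1` modulo `|d|`, then `J(d | b₀) = 1`. -/
lemma jacobi_eq_one_aux (b₀ : ℕ) (h8 : b₀ % 8 = 1) :
    ∀ n : ℕ, ∀ d : ℤ, d.natAbs = n → d ≠ 0 → b₀ ≡ 1 [MOD d.natAbs] → J(d | b₀) = 1 := by
  have hb4 : b₀ % 4 = 1 := by omega
  have hbodd : Odd b₀ := Nat.odd_iff.mpr (by omega)
  intro n
  induction n using Nat.strong_induction_on with
  | _ n ih =>
    intro d hdn hd0 hmod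
    rcases eq_or_ne n 1 with h1 | h1
    · have h2 : b₀ % 2 = 1 := by omega
      rcases Int.natAbs_eq_iff.mp (hdn.trans h1) with h | h <;> rw [h]
      · simpa using jacobiSym.one_left b₀
      · rw [show (((1 : ℕ) : ℤ)) = 1 by norm_num, jacobiSym.at_neg_one hbodd,
          ZMod.χ₄_nat_eq_if_mod_four, hb4, h2]
        norm_num
    · have hn0 : n ≠ 0 := by
        rw [← hdn, Int.natAbs_ne_zero]; exact hd0
      set p := n.minFac with hp
      have hpp : p.Prime := Nat.minFac_prime h1
      have hpd : (p : ℤ) ∣ d := by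
        rw [Int.natCast_dvd]; exact hdn ▸ n.minFac_dvd
      obtain ⟨d₂, hd₂⟩ := hpd
      have hd₂0 : d₂ ≠ 0 := by rintro rfl; rw [mul_zero] at hd₂; exact hd0 hd₂
      have hnpd : n = p * d₂.natAbs := by
        rw [← hdn, hd₂, Int.natAbs_mul, Int.natAbs_natCast]
      have hdn₂ : d₂.natAbs = n / p := by
        rw [hnpd, Nat.mul_div_cancel_left _ hpp.pos]
      have hlt : n / p < n := Nat.div_lt_self (Nat.pos_of_ne_zero hn0) hpp.one_lt
      have hdvd₂ : d₂.natAbs ∣ d.natAbs := Int.natAbs_dvd_natAbs.mpr ⟨p, by rw [hd₂]; ring⟩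
      have hmod₂ : b₀ ≡ 1 [MOD d₂.natAbs] := hmod.of_dvd hdvd₂
      have hrec : J((d₂ : ℤ) | b₀) = 1 := ih _ (hdn₂ ▸ hlt) d₂ hdn₂ hd₂0 hmod₂
      have hmodp : b₀ ≡ 1 [MOD p] := hmod.of_dvd (hdn ▸ n.minFac_dvd)
      have hJp : J((p : ℤ) | b₀) = 1 := by
        rcases eq_or_ne p 2 with h2 | h2
        · have h2' : b₀ % 2 = 1 := by omega
          rw [h2, show ((2 : ℕ) : ℤ) = 2 by norm_num, jacobiSym.at_two hbodd,
            ZMod.χ₈_nat_eq_if_mod_eight, h8, h2']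
          norm_num
        · have hpodd : Odd p := hpp.odd_of_ne_two h2
          rw [jacobiSym.quadratic_reciprocity_one_mod_four' hpodd hb4]
          have hcast : (b₀ : ℤ) % (p : ℤ) = (1 : ℤ) % (p : ℤ) := by exact_mod_cast hmodp
          rw [jacobiSym.mod_left' hcast]
          exact jacobiSym.one_left p
      rw [hd₂, jacobiSym.mul_left, hJp, hrec, one_mul]

open scoped NumberTheorySymbols in
/-- For a squarefree integer `b ≠ 1` there is an odd number `b₀` with `J(b | b₀) = -1`. -/
lemma exists_jacobi_neg_one (b : ℤ) (hb : Squarefree b) (hb1 : b ≠ 1) :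
    ∃ b₀ : ℕ, Odd b₀ ∧ J(b | b₀) = -1 := by
  have hb0 : b ≠ 0 := hb.ne_zero
  by_cases hodd : ∃ q : ℕ, q.Prime ∧ q ≠ 2 ∧ (q : ℤ) ∣ b
  · obtain ⟨q, hq, hq2, hqb⟩ := hodd
    haveI : Fact q.Prime := ⟨hq⟩
    obtain ⟨d₂, hd₂⟩ := hqb
    have hd₂0 : d₂ ≠ 0 := by rintro rfl; rw [mul_zero] at hd₂; exact hb0 hd₂
    have hqd₂ : ¬ (q : ℤ) ∣ d₂ := by
      intro ⟨e, he⟩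
      exact (Int.prime_iff_natAbs_prime.mpr (by simpa using hq)).not_unit
        (hb q ⟨e, by rw [hd₂, he]; ring⟩)
    -- a nonsquare modulo q
    obtain ⟨u, hu⟩ := FiniteField.exists_nonsquare
      (F := ZMod q) (by rw [ZMod.ringChar_zmod_n]; exact hq2)
    set K := 8 * d₂.natAbs with hK
    have hco : Nat.Coprime K q := by
      apply Nat.Coprime.mul
      · exact Nat.Coprime.pow_left 3 (((Nat.coprime_primes Nat.prime_two hq).mpr
          (Ne.symm hq2)))
      · exact (Nat.Prime.coprime_iff_not_dvd hq).mpr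
          (fun h => hqd₂ (Int.natCast_dvd.mpr h)) |>.symm
    set b₀ : ℕ := (Nat.chineseRemainder hco 1 u.val).1 with hb₀def
    obtain ⟨h1, h2⟩ := (Nat.chineseRemainder hco 1 u.val).2
    have h8 : b₀ % 8 = 1 := by
      have := (h1.of_dvd ⟨d₂.natAbs, rfl⟩ : b₀ ≡ 1 [MOD 8])
      simpa [Nat.ModEq] using this
    have hbodd : Odd b₀ := Nat.odd_iff.mpr (by omega)
    have hb4 : b₀ % 4 = 1 := by omega
    refine ⟨b₀, hbodd, ?_⟩
    have hmodd₂ : b₀ ≡ 1 [MOD d₂.natAbs] := h1.of_dvd ⟨8, by rw [hK]; ring⟩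
    have hJd₂ : J((d₂ : ℤ) | b₀) = 1 :=
      jacobi_eq_one_aux b₀ h8 d₂.natAbs d₂ rfl hd₂0 hmodd₂
    have hJq : J((q : ℤ) | b₀) = -1 := by
      rw [jacobiSym.quadratic_reciprocity_one_mod_four' (hq.odd_of_ne_two hq2) hb4]
      have hcast : ((b₀ : ℤ) : ZMod q) = u := by
        have : (b₀ : ZMod q) = (u.val : ZMod q) :=
          (ZMod.natCast_eq_natCast_iff _ _ _).mpr h2
        rw [Int.cast_natCast, this, ZMod.natCast_rightInverse u]
      exact ZMod.nonsquare_iff_jacobiSym_eq_neg_one.mpr (by rw [hcast]; exact hu)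
    rw [hd₂, jacobiSym.mul_left, hJq, hJd₂, mul_one]
  · -- here b ∈ {-1, 2, -2}
    push_neg at hodd
    have hnab : b.natAbs = 1 ∨ b.natAbs = 2 := by
      set n := b.natAbs with hn
      have hn0 : n ≠ 0 := fun h => hb0 (Int.natAbs_eq_zero.mp h)
      have ho : ordCompl[2] n = 1 := by
        by_contra ho
        have hqp : (ordCompl[2] n).minFac.Prime := Nat.minFac_prime ho
        have hqd : (ordCompl[2] n).minFac ∣ n :=
          Nat.dvd_trans (Nat.minFac_dvd (ordCompl[2] n)) (Nat.ordCompl_dvd n 2)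
        have hq2 : (ordCompl[2] n).minFac ≠ 2 := by
          intro h
          have h2 : ¬ 2 ∣ ordCompl[2] n := Nat.not_dvd_ordCompl Nat.prime_two hn0
          have hdd : (ordCompl[2] n).minFac ∣ ordCompl[2] n := Nat.minFac_dvd _
          rw [h] at hdd
          exact h2 hdd
        exact hodd _ hqp hq2 (Int.natCast_dvd.mpr hqd)
      have hpow : 2 ^ n.factorization 2 = n := by
        have := Nat.ordProj_mul_ordCompl_eq_self n 2
        rw [ho, mul_one] at this; exact this
      have hle : n.factorization 2 ≤ 1 :=
        (Nat.squarefree_iff_factorization_le_one hn0).mp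
          (Int.squarefree_natAbs.mpr hb) 2
      interval_cases h : n.factorization 2 <;> simp [h] at hpow <;> omega
    have hbcases : b = -1 ∨ b = 2 ∨ b = -2 := by
      rcases hnab with h | h
      · rcases Int.natAbs_eq_iff.mp h with h' | h'
        · exact absurd (by exact_mod_cast h') hb1
        · left; exact_mod_cast h'
      · rcases Int.natAbs_eq_iff.mp h with h' | h'
        · right; left; exact_mod_cast h'
        · right; right; exact_mod_cast h'
    rcases hbcases with rfl | rfl | rfl
    · refine ⟨3, by decide, ?_⟩
      rw [jacobiSym.at_neg_one (by decide), ZMod.χ₄_nat_eq_if_mod_four]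
      norm_num
    · refine ⟨3, by decide, ?_⟩
      rw [jacobiSym.at_two (by decide), ZMod.χ₈_nat_eq_if_mod_eight]
      norm_num
    · refine ⟨5, by decide, ?_⟩
      rw [jacobiSym.at_neg_two (by decide), ZMod.χ₈'_nat_eq_if_mod_eight]
      norm_num

open scoped NumberTheorySymbols in
/-- For a squarefree integer `b ≠ 1` and any finite set `S` of primes, there is a prime
`ℓ ∉ S` such that `b` is a nonsquare modulo `ℓ`. -/
lemma exists_prime_nonsquare (b : ℤ) (hb : Squarefree b) (hb1 : b ≠ 1) (S : Finset ℕ) :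
    ∃ ℓ : ℕ, ℓ.Prime ∧ ℓ ∉ S ∧ ¬ IsSquare ((b : ZMod ℓ)) := by
  have hb0 : b ≠ 0 := hb.ne_zero
  obtain ⟨b₀, hbodd, hJ⟩ := exists_jacobi_neg_one b hb hb1
  set M := 4 * b.natAbs with hM
  haveI : NeZero M := ⟨by positivity⟩
  have hb₀0 : b₀ ≠ 0 := by rintro rfl; exact (by decide : ¬ Odd 0) hbodd
  haveI : NeZero b₀ := ⟨hb₀0⟩
  have hco : Nat.Coprime b₀ M := by
    apply Nat.Coprime.mul_right
    · exact Nat.Coprime.pow_right 2 (Nat.coprime_two_right.mpr hbodd)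
    · have : Int.gcd b b₀ = 1 := by
        by_contra h
        rw [jacobiSym.eq_zero_iff_not_coprime.mpr h] at hJ
        norm_num at hJ
      rw [Int.gcd] at this
      exact (Nat.coprime_comm.mp this)
  have hunit : IsUnit ((b₀ : ZMod M)) := (ZMod.isUnit_iff_coprime b₀ M).mpr hco
  obtain ⟨ℓ, hgt, hp, hmodℓ⟩ := Nat.forall_exists_prime_gt_and_eq_mod hunit (S.sup id)
  have hnotS : ℓ ∉ S := fun h => absurd (Finset.le_sup (f := id) h) (not_le.mpr hgt)
  have hmeq : ℓ ≡ b₀ [MOD M] := (ZMod.natCast_eq_natCast_iff _ _ _).mp hmodℓ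
  have hℓodd : Odd ℓ := by
    have h2 : ℓ ≡ b₀ [MOD 2] := hmeq.of_dvd ⟨2 * b.natAbs, by rw [hM]; ring⟩
    have := Nat.odd_iff.mp hbodd
    have h2' : ℓ % 2 = b₀ % 2 := h2
    rw [Nat.odd_iff]
    omega
  have hJℓ : J(b | ℓ) = -1 := by
    rw [jacobiSym.mod_right b hℓodd, show ℓ % (4 * b.natAbs) = b₀ % (4 * b.natAbs) from hmeq,
      ← jacobiSym.mod_right b hbodd]
    exact hJ
  haveI : Fact ℓ.Prime := ⟨hp⟩
  exact ⟨ℓ, hp, hnotS, ZMod.nonsquare_iff_jacobiSym_eq_neg_one.mp hJℓ⟩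

/-- An integer that is a square in `ℚ_ℓ` is a square modulo `ℓ`. -/
lemma isSquare_zmod_of_padic_square (ℓ : ℕ) [Fact ℓ.Prime] (b : ℤ) (t : ℚ_[ℓ])
    (h : (b : ℚ_[ℓ]) = t ^ 2) : IsSquare ((b : ZMod ℓ)) := by
  have ht : ‖t‖ ≤ 1 := by
    have h1 : ‖t‖ ^ 2 = ‖(b : ℚ_[ℓ])‖ := by rw [h, norm_pow]
    have h2 : ‖(b : ℚ_[ℓ])‖ ≤ 1 := Padic.norm_int_le_one b
    nlinarith [norm_nonneg t]
  set T : ℤ_[ℓ] := ⟨t, ht⟩ with hT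
  have hbT : (b : ℤ_[ℓ]) = T ^ 2 := by
    apply Subtype.coe_injective
    push_cast
    exact h
  refine ⟨PadicInt.toZMod T, ?_⟩
  have := congrArg (PadicInt.toZMod (p := ℓ)) hbT
  rw [map_intCast, map_pow] at this
  rw [this, sq]

/-- a nondegenerate rank-one quadratic form over `ℚ` is determined by its
discriminant `α ∈ ℚ^×/(ℚ^×)²`.  If for almost all primes `ℓ` the image of `α` in
`ℚ_ℓ^×/(ℚ_ℓ^×)²` equals the class of a fixed nonzero rational number `c`, then `α = c`
in `ℚ^×/(ℚ^×)²`, i.e. `α/c` is a nonzero rational square. -/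
theorem rank_one_form_grunwald_wang (α c : ℚ) (hα : α ≠ 0) (hc : c ≠ 0)
    (S : Finset ℕ)
    (hloc : ∀ (ℓ : ℕ) (_ : Fact ℓ.Prime), ℓ ∉ S →
      ∃ t : ℚ_[ℓ], t ≠ 0 ∧ (α : ℚ_[ℓ]) = (c : ℚ_[ℓ]) * t ^ 2) :
    ∃ t : ℚ, t ≠ 0 ∧ α = c * t ^ 2 := by
  set r : ℚ := α / c with hr
  have hr0 : r ≠ 0 := div_ne_zero hα hc
  set N : ℤ := r.num * r.den with hN
  have hN0 : N ≠ 0 := mul_ne_zero (Rat.num_ne_zero.mpr hr0) (by exact_mod_cast r.den_nz)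
  -- decompose N = b * a² with b squarefree
  obtain ⟨bb, aa, hab, hsf⟩ := Nat.sq_mul_squarefree N.natAbs
  have hNsign : N = N.sign * N.natAbs := (Int.sign_mul_natAbs N).symm
  set b : ℤ := N.sign * bb with hbdef
  set a : ℤ := (aa : ℤ) with hadef
  have hNab : N = b * a ^ 2 := by
    rw [hNsign, hbdef, hadef, mul_assoc]
    congr 1
    have h' : (bb * aa ^ 2 : ℕ) = N.natAbs := by rw [← hab]; ring
    exact_mod_cast h'.symm
  have ha0 : a ≠ 0 := by
    intro h; rw [h, zero_pow (by norm_num), mul_zero] at hNab; exact hN0 hNab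
  have hb0 : b ≠ 0 := by
    intro h; rw [h, zero_mul] at hNab; exact hN0 hNab
  have hbsf : Squarefree b := by
    rw [← Int.squarefree_natAbs]
    have : b.natAbs = bb := by
      rw [hbdef, Int.natAbs_mul, Int.natAbs_sign_of_ne_zero hN0, one_mul, Int.natAbs_natCast]
    rw [this]; exact hsf
  -- r = N / den², α = c * r
  have hden : ((r.den : ℚ)) ≠ 0 := by exact_mod_cast r.den_nz
  have hkey : (r.num : ℚ) = r * (r.den : ℚ) := by
    exact ((eq_div_iff hden).mp (Rat.num_div_den r).symm).symm
  have hrN : (N : ℚ) = r * (r.den : ℚ) ^ 2 := by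
    rw [hN]
    push_cast
    rw [hkey]
    ring
  by_cases hb1 : b = 1
  · -- N = a², so r = (a / den)²
    refine ⟨(a : ℚ) / (r.den : ℚ), div_ne_zero (by exact_mod_cast ha0) hden, ?_⟩
    have hNa : (N : ℚ) = (a : ℚ) ^ 2 := by rw [hNab, hb1]; push_cast; ring
    have hrsq : r = ((a : ℚ) / (r.den : ℚ)) ^ 2 := by
      rw [div_pow, ← hNa, hrN]
      field_simp
    rw [← hrsq, hr]
    field_simp
  · -- contradiction: b is a nonsquare mod some good prime ℓ
    exfalso
    obtain ⟨ℓ, hp, hnotS, hnsq⟩ := exists_prime_nonsquare b hbsf hb1 S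
    haveI : Fact ℓ.Prime := ⟨hp⟩
    obtain ⟨t, ht0, htα⟩ := hloc ℓ ⟨hp⟩ hnotS
    apply hnsq
    -- (b : ℚ_ℓ) is a square
    have hcℓ : ((c : ℚ) : ℚ_[ℓ]) ≠ 0 := by
      simpa using (Rat.cast_injective (α := ℚ_[ℓ])).ne_iff.mpr hc
    have hrℓ : ((r : ℚ) : ℚ_[ℓ]) = t ^ 2 := by
      rw [hr]
      push_cast
      rw [htα]
      field_simp
    have hNℓ : ((N : ℤ) : ℚ_[ℓ]) = (t * (r.den : ℚ_[ℓ])) ^ 2 := by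
      have := congrArg (fun x : ℚ => ((x : ℚ_[ℓ])) ) hrN
      simp only [Rat.cast_intCast, Rat.cast_mul, Rat.cast_pow, Rat.cast_natCast] at this
      rw [this, hrℓ]
      ring
    have haℓ : ((a : ℤ) : ℚ_[ℓ]) ≠ 0 := by exact_mod_cast ha0
    refine isSquare_zmod_of_padic_square ℓ b (t * (r.den : ℚ_[ℓ]) / (a : ℚ_[ℓ])) ?_
    have : ((b : ℚ_[ℓ])) * ((a : ℚ_[ℓ])) ^ 2 = ((N : ℚ_[ℓ])) := by
      rw [hNab]; push_cast; ring
    rw [div_pow, eq_div_iff (pow_ne_zero 2 haℓ), ← hNℓ, ← this]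
end

section
/- Let E ⊇ E₀ and F ⊇ F₀ be finite extensions inside a field L, with E₀, F₀ linearly disjoint over K, E linearly disjoint from F₀ over K, and E₀ linearly disjoint from F over K. For α ∈ E ∩ F, one has [EF:E₀F]·Tr_{E₀F/E₀F₀}(α) = [EF:EF₀]·Tr_{EF₀/E₀F₀}(α), and Tr_{EF₀/E₀F₀}(α) = Tr_{E/E₀}(α). -/
open IntermediateField

/-- The trace, `Tr_{E/F} : E → F ⊆ L`, of a pair of nested intermediate fields
`F ≤ E` of `L/K`, applied to an element `x ∈ E` and viewed inside `L`. -/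
noncomputable def relTrace {K L : Type*} [Field K] [Field L] [Algebra K L]
    {F E : IntermediateField K L} (h : F ≤ E) (x : L) (hx : x ∈ E) : L :=
  algebraMap F L (Algebra.trace F (extendScalars h) (⟨x, hx⟩ : extendScalars h))

/-- The degree `[E : F]` of a pair of nested intermediate fields `F ≤ E` of `L/K`. -/
noncomputable def relDegree {K L : Type*} [Field K] [Field L] [Algebra K L]
    {F E : IntermediateField K L} (h : F ≤ E) : ℕ :=
  Module.finrank F (extendScalars h)

set_option synthInstance.maxHeartbeats 1000000 in
set_option maxHeartbeats 1000000 in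
theorem relTrace_trans {K L : Type*} [Field K] [Field L] [Algebra K L]
    {A B D : IntermediateField K L} (hAB : A ≤ B) (hBD : B ≤ D)
    [FiniteDimensional ↥A (extendScalars hAB)]
    [FiniteDimensional ↥B (extendScalars hBD)]
    {x : L} (hx : x ∈ B) :
    relTrace (hAB.trans hBD) x (hBD hx) = (relDegree hBD : L) * relTrace hAB x hx := by
  set B₁ := extendScalars hAB with hB₁
  set D₁ := extendScalars (hAB.trans hBD) with hD₁
  have h' : B₁ ≤ D₁ := fun y hy => hBD hy
  set D₂ := extendScalars h' with hD₂
  letI : Algebra ↥A ↥D₂ := (inferInstance : Algebra ↥A ↥D₁)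
  haveI : IsScalarTower ↥A ↥B₁ ↥D₂ := IsScalarTower.of_algebraMap_eq fun a => Subtype.ext rfl
  haveI : FiniteDimensional ↥B₁ ↥D₂ := inferInstanceAs (FiniteDimensional ↥B (extendScalars hBD))
  have key : Algebra.trace ↥A ↥D₁ (⟨x, hBD hx⟩ : D₁)
      = Module.finrank ↥B₁ ↥D₂ • Algebra.trace ↥A ↥B₁ (⟨x, hx⟩ : B₁) := by
    have e1 : Algebra.trace ↥A ↥D₁ (⟨x, hBD hx⟩ : D₁)
        = Algebra.trace ↥A ↥B₁ (Algebra.trace ↥B₁ ↥D₂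
            (algebraMap ↥B₁ ↥D₂ (⟨x, hx⟩ : B₁))) := by
      exact (Algebra.trace_trace (algebraMap ↥B₁ ↥D₂ (⟨x, hx⟩ : B₁))).symm
    rw [e1, Algebra.trace_algebraMap, map_nsmul]
  have hdeg : relDegree hBD = Module.finrank ↥B₁ ↥D₂ := rfl
  show algebraMap ↥A L (Algebra.trace ↥A ↥D₁ (⟨x, hBD hx⟩ : D₁)) = _
  rw [key, map_nsmul, hdeg, nsmul_eq_mul]
  rfl

theorem coe_smul_ext {K L : Type*} [Field K] [Field L] [Algebra K L] {A B : IntermediateField K L}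
    (h : A ≤ B) (a : ↥A) (m : extendScalars h) :
    ((a • m : extendScalars h) : L) = (a : L) * (m : L) := rfl

theorem relTrace_congr_basis {K L : Type*} [Field K] [Field L] [Algebra K L]
    {A B A' B' : IntermediateField K L} (hAB : A ≤ B) (hA'B' : A' ≤ B') (hA : A ≤ A')
    {ι : Type*} [Fintype ι] [DecidableEq ι]
    (b : Module.Basis ι ↥A (extendScalars hAB)) (b' : Module.Basis ι ↥A' (extendScalars hA'B'))
    (hbb : ∀ i, (b i : L) = (b' i : L))
    {x : L} (hx : x ∈ B) (hx' : x ∈ B') :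
    relTrace hA'B' x hx' = relTrace hAB x hx := by
  classical
  set xB : extendScalars hAB := ⟨x, hx⟩ with hxB
  set xB' : extendScalars hA'B' := ⟨x, hx'⟩ with hxB'
  set c : ι → ι → ↥A := fun i j => b.repr (xB * b i) j with hc
  have hcL : ∀ i, x * (b i : L) = ∑ j, (c i j : L) * (b j : L) := by
    intro i
    have h0 := b.sum_repr (xB * b i)
    have h1 : ((∑ j, b.repr (xB * b i) j • b j : extendScalars hAB) : L)
        = ((xB * b i : extendScalars hAB) : L) := congrArg Subtype.val h0
    simp only [AddSubmonoidClass.coe_finset_sum, coe_smul_ext] at h1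
    rw [show ((xB * b i : extendScalars hAB) : L) = x * (b i : L) from rfl] at h1
    rw [h1]
  have key : ∀ i, xB' * b' i = ∑ j, (⟨(c i j : L), hA (c i j).2⟩ : ↥A') • b' j := by
    intro i
    apply Subtype.ext
    show ((xB' * b' i : extendScalars hA'B') : L)
        = ((∑ j, (⟨(c i j : L), hA (c i j).2⟩ : ↥A') • b' j : extendScalars hA'B') : L)
    simp only [AddSubmonoidClass.coe_finset_sum, coe_smul_ext]
    rw [show ((xB' * b' i : extendScalars hA'B') : L) = x * (b' i : L) from rfl]
    rw [← hbb i, hcL i]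
    exact Finset.sum_congr rfl fun j _ => by rw [hbb j]
  have hrepr : ∀ i j, b'.repr (xB' * b' i) j = ⟨(c i j : L), hA (c i j).2⟩ := by
    intro i j
    rw [key i, Module.Basis.repr_sum_self]
  have t1 : Algebra.trace ↥A' (extendScalars hA'B') xB' = ∑ i, (⟨(c i i : L), hA (c i i).2⟩ : ↥A') := by
    rw [Algebra.trace_eq_matrix_trace b' xB', Matrix.trace]
    congr 1
    ext i
    rw [Matrix.diag_apply, Algebra.leftMulMatrix_eq_repr_mul, hrepr i i]
  have t2 : Algebra.trace ↥A (extendScalars hAB) xB = ∑ i, c i i := by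
    rw [Algebra.trace_eq_matrix_trace b xB, Matrix.trace]
    congr 1
    ext i
    rw [Matrix.diag_apply, Algebra.leftMulMatrix_eq_repr_mul, hc]
  show algebraMap ↥A' L _ = algebraMap ↥A L _
  rw [t1, t2]
  push_cast
  rfl

theorem exists_mul_mem_of_mem_sup {K L : Type*} [Field K] [Field L] [Algebra K L]
    {A B R : IntermediateField K L} (M : Submodule ↥R L)
    (hmul : ∀ x ∈ M, ∀ y ∈ M, x * y ∈ M) (hone : (1 : L) ∈ M)
    (hAM : (A : Set L) ⊆ M) (hBM : (B : Set L) ⊆ M)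
    {x : L} (hx : x ∈ A ⊔ B) :
    ∃ p ∈ M, ∃ q ∈ M, q ≠ 0 ∧ x * q = p := by
  have hval : ∀ t : MvPolynomial ↑((A : Set L) ∪ (B : Set L)) K,
      MvPolynomial.aeval Subtype.val t ∈ M := by
    intro t
    induction t using MvPolynomial.induction_on with
    | C a =>
      rw [MvPolynomial.aeval_C]
      have h1 := M.smul_mem (algebraMap K ↥R a) hone
      rwa [Algebra.smul_def, mul_one, ← IsScalarTower.algebraMap_apply K ↥R L] at h1
    | add p q hp hq => rw [map_add]; exact M.add_mem hp hq
    | mul_X p i hp =>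
      rw [map_mul, MvPolynomial.aeval_X]
      refine hmul _ hp _ ?_
      rcases i.2 with h | h
      · exact hAM h
      · exact hBM h
  rw [sup_def, mem_adjoin_iff] at hx
  obtain ⟨r, s, hrs⟩ := hx
  by_cases hs : MvPolynomial.aeval (Subtype.val : ↑((A : Set L) ∪ (B : Set L)) → L) s = 0
  · refine ⟨0, M.zero_mem, 1, hone, one_ne_zero, ?_⟩
    rw [hrs, hs, div_zero, zero_mul]
  · refine ⟨_, hval r, _, hval s, hs, ?_⟩
    rw [hrs]
    field_simp


set_option maxHeartbeats 2000000 in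
set_option synthInstance.maxHeartbeats 1000000 in
theorem relTrace_sup_eq {K L : Type*} [Field K] [Field L] [Algebra K L]
    (E₀ E F₀ : IntermediateField K L) (hE : E₀ ≤ E)
    [FiniteDimensional ↥E₀ (extendScalars hE)]
    (h2 : E₀ ⊔ F₀ ≤ E ⊔ F₀)
    (hdisj₁ : E.LinearDisjoint F₀)
    {α : L} (hαE : α ∈ E) :
    relTrace h2 α ((le_sup_left : E ≤ E ⊔ F₀) hαE) = relTrace hE α hαE := by
  classical
  set n := Module.finrank ↥E₀ (extendScalars hE) with hn
  set b := Module.finBasis ↥E₀ (extendScalars hE) with hb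
  set v : Fin n → L := fun i => (b i : L) with hv
  have hvE : ∀ i, v i ∈ E := fun i => (b i).2
  have hbliL : LinearIndependent ↥E₀ v :=
    b.linearIndependent.map' (extendScalars hE).val.toLinearMap
      (LinearMap.ker_eq_bot.mpr Subtype.coe_injective)
  -- the E₀-span of F₀ inside L
  set M₀ : Submodule ↥E₀ L := Submodule.span ↥E₀ (F₀ : Set L) with hM₀
  have hmulM₀ : ∀ x ∈ M₀, ∀ y ∈ M₀, x * y ∈ M₀ := by
    have h1 : M₀ * M₀ ≤ M₀ := by
      rw [hM₀, Submodule.span_mul_span]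
      refine Submodule.span_le.mpr ?_
      rintro z ⟨a, ha, c, hc, rfl⟩
      exact Submodule.subset_span (mul_mem ha hc)
    exact fun x hx y hy => Submodule.mul_le.mp h1 x hx y hy
  have hone₀ : (1 : L) ∈ M₀ := Submodule.subset_span (one_mem F₀)
  have hE₀M₀ : (E₀ : Set L) ⊆ M₀ := by
    intro e he
    have h1 := M₀.smul_mem (⟨e, he⟩ : ↥E₀) hone₀
    rwa [Algebra.smul_def, mul_one, IntermediateField.algebraMap_apply] at h1
  have hF₀M₀ : (F₀ : Set L) ⊆ M₀ := Submodule.subset_span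
  -- a K-basis of F₀
  set u := Module.Free.chooseBasis K ↥F₀ with hu
  set valu : Module.Free.ChooseBasisIndex K ↥F₀ → L := fun j => (u j : L) with hvalu
  have hindep_u : LinearIndependent ↥E (F₀.val ∘ u) :=
    hdisj₁.linearIndependent_right u.linearIndependent
  have hM₀le : M₀ ≤ Submodule.span ↥E₀ (Set.range valu) := by
    refine Submodule.span_le.mpr ?_
    intro f hf
    have h1 : (⟨f, hf⟩ : ↥F₀) ∈ Submodule.span K (Set.range u) := Module.Basis.mem_span u _
    have h2 : f ∈ Submodule.span K (Set.range valu) := by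
      have h3 := Submodule.mem_map_of_mem (f := F₀.val.toLinearMap) h1
      rw [Submodule.map_span, ← Set.range_comp] at h3
      exact h3
    exact Submodule.span_subset_span K ↥E₀ _ h2
  -- linear independence of v over E₀ ⊔ F₀
  have hliL : LinearIndependent ↥(E₀ ⊔ F₀ : IntermediateField K L) v := by
    rw [Fintype.linearIndependent_iff]
    intro g hg
    choose p hp q hq hq0 hgq using fun i =>
      exists_mul_mem_of_mem_sup (A := E₀) (B := F₀) M₀ hmulM₀ hone₀ hE₀M₀ hF₀M₀ (g i).2
    set Q := ∏ i, q i with hQ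
    have hQ0 : Q ≠ 0 := Finset.prod_ne_zero_iff.mpr fun i _ => hq0 i
    have hprodmem : ∀ s : Finset (Fin n), (∏ i ∈ s, q i) ∈ M₀ := fun s =>
      Finset.prod_induction _ _ (fun a c ha hc => hmulM₀ a ha c hc) hone₀ (fun i _ => hq i)
    set d : Fin n → L := fun i => (g i : L) * Q with hd
    have hdM : ∀ i, d i ∈ M₀ := by
      intro i
      have h1 : d i = p i * ∏ j ∈ Finset.univ.erase i, q j := by
        rw [hd]
        simp only
        rw [hQ, ← Finset.mul_prod_erase Finset.univ q (Finset.mem_univ i), ← mul_assoc, hgq i]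
      rw [h1]
      exact hmulM₀ _ (hp i) _ (hprodmem _)
    have hsum : ∑ i, d i * v i = 0 := by
      have h1 : (∑ i, (g i : L) * v i) * Q = 0 := by
        rw [show (∑ i, (g i : L) * v i) = ∑ i, g i • v i from rfl, hg, zero_mul]
      rw [Finset.sum_mul] at h1
      rw [← h1]
      exact Finset.sum_congr rfl fun i _ => by rw [hd]; ring
    have hrep : ∀ i, d i ∈ Submodule.span ↥E₀ (Set.range valu) := fun i => hM₀le (hdM i)
    choose e he using fun i => Finsupp.mem_span_range_iff_exists_finsupp.mp (hrep i)
    set s : Finset (Module.Free.ChooseBasisIndex K ↥F₀) :=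
      Finset.univ.biUnion (fun i => (e i).support) with hs
    have hesub : ∀ i, (e i).support ⊆ s := fun i => Finset.subset_biUnion_of_mem (fun i' => (e i').support) (Finset.mem_univ i)
    have hde : ∀ i, d i = ∑ j ∈ s, ((e i) j : L) * valu j := by
      intro i
      rw [← he i, Finsupp.sum_of_support_subset (e i) (hesub i) (fun j a => a • valu j)
        (fun j _ => zero_smul _ _)]
      exact Finset.sum_congr rfl fun j _ => rfl
    have hswap : ∑ j ∈ s, (∑ i, ((e i) j : L) * v i) * valu j = 0 := by
      calc ∑ j ∈ s, (∑ i, ((e i) j : L) * v i) * valu j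
          = ∑ j ∈ s, ∑ i, ((e i) j : L) * valu j * v i := by
            refine Finset.sum_congr rfl fun j _ => ?_
            rw [Finset.sum_mul]
            exact Finset.sum_congr rfl fun i _ => by ring
        _ = ∑ i, ∑ j ∈ s, ((e i) j : L) * valu j * v i := Finset.sum_comm
        _ = ∑ i, d i * v i := by
            refine Finset.sum_congr rfl fun i _ => ?_
            rw [hde i, Finset.sum_mul]
        _ = 0 := hsum
    have hWmem : ∀ j, (∑ i, ((e i) j : L) * v i) ∈ E := fun j =>
      sum_mem fun i _ => mul_mem (hE (e i j).2) (hvE i)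
    set W : Module.Free.ChooseBasisIndex K ↥F₀ → ↥E := fun j => ⟨_, hWmem j⟩ with hW
    have hW0 : ∀ j ∈ s, W j = 0 := by
      refine linearIndependent_iff'.mp hindep_u s W ?_
      rw [← hswap]
      exact Finset.sum_congr rfl fun j _ => rfl
    have he0 : ∀ i j, (e i) j = 0 := by
      intro i j
      by_cases hj : j ∈ s
      · have h1 : (∑ i', ((e i') j : L) * v i') = 0 := congrArg Subtype.val (hW0 j hj)
        have h2 : ∀ i', (e i' j) • v i' = ((e i' j : L)) * v i' := fun _ => rfl
        have h3 : (∑ i', (e i' j) • v i') = 0 := by rw [← h1]; exact Finset.sum_congr rfl fun _ _ => rfl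
        exact Fintype.linearIndependent_iff.mp hbliL (fun i' => e i' j) h3 i
      · exact Finsupp.notMem_support_iff.mp fun hmem => hj (hesub i hmem)
    have hdz : ∀ i, d i = 0 := by
      intro i
      rw [← he i]
      have : e i = 0 := Finsupp.ext fun j => he0 i j
      rw [this, Finsupp.sum_zero_index]
    intro i
    have h1 : (g i : L) * Q = 0 := hdz i
    have h2 : (g i : L) = 0 := by
      rcases mul_eq_zero.mp h1 with h | h
      · exact h
      · exact absurd h hQ0
    exact Subtype.ext h2
  -- spanning
  set M₁ : Submodule ↥(E₀ ⊔ F₀ : IntermediateField K L) L :=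
    Submodule.span ↥(E₀ ⊔ F₀ : IntermediateField K L) (Set.range v) with hM₁
  have hEM₁ : (E : Set L) ⊆ M₁ := by
    intro y hy
    have h1 : (⟨y, hy⟩ : extendScalars hE) ∈ Submodule.span ↥E₀ (Set.range b) := Module.Basis.mem_span b _
    have h2 : y ∈ Submodule.span ↥E₀ (Set.range v) := by
      have h3 := Submodule.mem_map_of_mem (f := (extendScalars hE).val.toLinearMap) h1
      rw [Submodule.map_span, ← Set.range_comp] at h3
      exact h3
    refine Submodule.span_induction (p := fun z _ => z ∈ M₁)
      (fun z hz => Submodule.subset_span hz) (Submodule.zero_mem _)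
      (fun a c _ _ ha hc => Submodule.add_mem _ ha hc) (fun r z _ hz => ?_) h2
    show r • z ∈ M₁
    have h4 : r • z = (⟨(r : L), (le_sup_left : E₀ ≤ E₀ ⊔ F₀) r.2⟩ :
        ↥(E₀ ⊔ F₀ : IntermediateField K L)) • z := rfl
    rw [h4]
    exact M₁.smul_mem _ hz
  have hone₁ : (1 : L) ∈ M₁ := hEM₁ (one_mem E)
  have hF₀M₁ : (F₀ : Set L) ⊆ M₁ := by
    intro f hf
    have h1 := M₁.smul_mem (⟨f, (le_sup_right : F₀ ≤ E₀ ⊔ F₀) hf⟩ :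
      ↥(E₀ ⊔ F₀ : IntermediateField K L)) hone₁
    rwa [Algebra.smul_def, mul_one, IntermediateField.algebraMap_apply] at h1
  have hmulM₁ : ∀ x ∈ M₁, ∀ y ∈ M₁, x * y ∈ M₁ := by
    have h1 : M₁ * M₁ ≤ M₁ := by
      rw [hM₁, Submodule.span_mul_span]
      refine Submodule.span_le.mpr ?_
      rintro z ⟨a, ha, c, hc, rfl⟩
      obtain ⟨i, rfl⟩ := ha
      obtain ⟨j, rfl⟩ := hc
      exact hEM₁ (mul_mem (hvE i) (hvE j))
    exact fun x hx y hy => Submodule.mul_le.mp h1 x hx y hy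
  have hsubset : ∀ y ∈ (E ⊔ F₀ : IntermediateField K L), y ∈ M₁ := by
    intro y hy
    obtain ⟨p', hp', q', hq', hq0', hyq⟩ :=
      exists_mul_mem_of_mem_sup (A := E) (B := F₀) M₁ hmulM₁ hone₁ hEM₁ hF₀M₁ hy
    haveI : FiniteDimensional ↥(E₀ ⊔ F₀ : IntermediateField K L) M₁ :=
      FiniteDimensional.span_of_finite _ (Set.finite_range v)
    set S₁ : Subalgebra ↥(E₀ ⊔ F₀ : IntermediateField K L) L :=
      M₁.toSubalgebra hone₁ (fun x y hx hy => hmulM₁ x hx y hy) with hS₁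
    haveI : FiniteDimensional ↥(E₀ ⊔ F₀ : IntermediateField K L) S₁ :=
      inferInstanceAs (FiniteDimensional ↥(E₀ ⊔ F₀ : IntermediateField K L) M₁)
    haveI : Algebra.IsAlgebraic ↥(E₀ ⊔ F₀ : IntermediateField K L) S₁ :=
      Algebra.IsAlgebraic.of_finite _ _
    have halg : IsAlgebraic ↥(E₀ ⊔ F₀ : IntermediateField K L) q' :=
      Subalgebra.isAlgebraic_iff_isAlgebraic_val.mp
        (Algebra.IsAlgebraic.isAlgebraic (⟨q', hq'⟩ : S₁))
    have hqi : q'⁻¹ ∈ S₁ :=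
      Subalgebra.inv_mem_of_algebraic (A := S₁) (x := (⟨q', hq'⟩ : S₁)) halg
    have hy' : y = p' * q'⁻¹ := by
      rw [← hyq, mul_assoc, mul_inv_cancel₀ hq0', mul_one]
    rw [hy']
    exact hmulM₁ _ hp' _ hqi
  -- build the basis of E ⊔ F₀ over E₀ ⊔ F₀
  have hvE' : ∀ i, v i ∈ E ⊔ F₀ := fun i => (le_sup_left : E ≤ E ⊔ F₀) (hvE i)
  set b'' : Fin n → extendScalars h2 := fun i => ⟨v i, hvE' i⟩ with hb''
  have hli'' : LinearIndependent ↥(E₀ ⊔ F₀ : IntermediateField K L) b'' :=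
    hliL.of_comp (extendScalars h2).val.toLinearMap
  have hsp : ⊤ ≤ Submodule.span ↥(E₀ ⊔ F₀ : IntermediateField K L) (Set.range b'') := by
    intro y _
    have h1 : (y : L) ∈ M₁ := hsubset _ y.2
    have h2 : (y : L) ∈ Submodule.map (extendScalars h2).val.toLinearMap
        (Submodule.span ↥(E₀ ⊔ F₀ : IntermediateField K L) (Set.range b'')) := by
      rw [Submodule.map_span, ← Set.range_comp]
      exact h1
    obtain ⟨z, hz, hzy⟩ := h2
    have h3 : z = y := Subtype.ext hzy
    rwa [← h3]
  set b' : Module.Basis (Fin n) ↥(E₀ ⊔ F₀ : IntermediateField K L) (extendScalars h2) :=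
    Module.Basis.mk hli'' hsp with hb'
  refine relTrace_congr_basis hE h2 (le_sup_left : E₀ ≤ E₀ ⊔ F₀) b b' (fun i => ?_) hαE ((le_sup_left : E ≤ E ⊔ F₀) hαE)
  rw [hb', Module.Basis.coe_mk]

/-- let `E ⊇ E₀`, `F ⊇ F₀` be finite extensions inside `L` (all of
characteristic zero), with `E₀, F₀` linearly disjoint over `K`, `E` linearly disjoint
from `F₀` over `K`, and `E₀` linearly disjoint from `F` over `K`.  For `α ∈ E ∩ F`,
one has `[EF:E₀F]·Tr_{E₀F/E₀F₀}(α) = [EF:EF₀]·Tr_{EF₀/E₀F₀}(α)` and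
`Tr_{EF₀/E₀F₀}(α) = Tr_{E/E₀}(α)`. -/
theorem trace_identity_of_linearly_disjoint {K L : Type*} [Field K] [Field L]
    [Algebra K L] [CharZero K]
    (E₀ E F₀ F : IntermediateField K L) (hE : E₀ ≤ E) (hF : F₀ ≤ F)
    [FiniteDimensional E₀ (extendScalars hE)]
    [FiniteDimensional F₀ (extendScalars hF)]
    (h1 : E₀ ⊔ F₀ ≤ E₀ ⊔ F) (h2 : E₀ ⊔ F₀ ≤ E ⊔ F₀)
    (h3 : E₀ ⊔ F ≤ E ⊔ F) (h4 : E ⊔ F₀ ≤ E ⊔ F)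
    [FiniteDimensional (E₀ ⊔ F₀ : IntermediateField K L) (extendScalars h1)]
    [FiniteDimensional (E₀ ⊔ F₀ : IntermediateField K L) (extendScalars h2)]
    [FiniteDimensional (E₀ ⊔ F : IntermediateField K L) (extendScalars h3)]
    [FiniteDimensional (E ⊔ F₀ : IntermediateField K L) (extendScalars h4)]
    (hdisj₀ : E₀.LinearDisjoint F₀)
    (hdisj₁ : E.LinearDisjoint F₀)
    (hdisj₂ : E₀.LinearDisjoint F)
    (α : L) (hαE : α ∈ E) (hαF : α ∈ F) :
    ((relDegree h3 : ℕ) : L) *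
        relTrace h1 α ((le_sup_right : F ≤ E₀ ⊔ F) hαF) =
      ((relDegree h4 : ℕ) : L) *
        relTrace h2 α ((le_sup_left : E ≤ E ⊔ F₀) hαE) ∧
    relTrace h2 α ((le_sup_left : E ≤ E ⊔ F₀) hαE) = relTrace hE α hαE := by
  constructor
  · have t3 := relTrace_trans h1 h3 (x := α) ((le_sup_right : F ≤ E₀ ⊔ F) hαF)
    have t4 := relTrace_trans h2 h4 (x := α) ((le_sup_left : E ≤ E ⊔ F₀) hαE)
    rw [← t3, ← t4]
  · exact relTrace_sup_eq E₀ E F₀ hE h2 hdisj₁ hαE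
end
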